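/- Let f, f', g, g' : ℕ → ℝ be sequences of nonnegative real numbers, none of which is identically zero, such that [f] = [f'], [g] = [g'], and each of the complexity classes [f], [f'], [g], [g'] is translation invariant. Then the discrete convolution f*g is not identically zero and [f*g] = [f'*g']. -/

import Mathlib

open Filter Finset

/-- The discrete convolution (Cauchy product) of two sequences. -/
def conv (f g : ℕ → ℝ) : ℕ → ℝ := fun n => ∑ s ∈ Finset.range (n + 1), f s * g (n - s)

/-- `[f] = [g]`: there are constants `c₁, c₂ > 0` with
`c₁ g(n) ≤ f(n) ≤ c₂ g(n)` for all but finitely many `n`. -/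
def SameClass (f g : ℕ → ℝ) : Prop :=
  ∃ c₁ c₂ : ℝ, 0 < c₁ ∧ 0 < c₂ ∧
    ∀ᶠ n in Filter.atTop, c₁ * g n ≤ f n ∧ f n ≤ c₂ * g n

/-- The complexity class `[f]` is translation invariant if `[n ↦ f(n+1)] = [f]`. -/
def TransInv (f : ℕ → ℝ) : Prop := SameClass (fun n => f (n + 1)) f

lemma mySameClass_symm {f g : ℕ → ℝ} (h : SameClass f g) : SameClass g f := by
  obtain ⟨c₁, c₂, h₁, h₂, hev⟩ := h
  refine ⟨c₂⁻¹, c₁⁻¹, by positivity, by positivity, hev.mono fun n ⟨hl, hr⟩ => ⟨?_, ?_⟩⟩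
  · have := mul_le_mul_of_nonneg_left hr (le_of_lt (inv_pos.mpr h₂))
    rwa [← mul_assoc, inv_mul_cancel₀ h₂.ne', one_mul] at this
  · have := mul_le_mul_of_nonneg_left hl (le_of_lt (inv_pos.mpr h₁))
    rwa [← mul_assoc, inv_mul_cancel₀ h₁.ne', one_mul] at this

lemma myconv_comm (f g : ℕ → ℝ) : conv f g = conv g f := by
  funext n
  unfold conv
  rw [← Finset.sum_range_reflect (fun j => g j * f (n - j)) (n + 1)]
  refine Finset.sum_congr rfl fun j hj => ?_
  rw [Finset.mem_range, Nat.lt_succ_iff] at hj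
  have h1 : n + 1 - 1 - j = n - j := by omega
  rw [h1, Nat.sub_sub_self hj, mul_comm]

lemma shift_bound {g : ℕ → ℝ} (hg : ∀ n, 0 ≤ g n) {a₁ a₂ : ℝ} (ha₁ : 0 < a₁)
    {N : ℕ} (h : ∀ m, N ≤ m → a₁ * g m ≤ g (m + 1) ∧ g (m + 1) ≤ a₂ * g m) :
    ∃ A : ℝ, 0 < A ∧ ∀ u v, N ≤ u → N ≤ v → u ≤ v + N → v ≤ u + N → g u ≤ A * g v := by
  set b := max 1 a₂ with hbdef
  set c := max 1 a₁⁻¹ with hcdef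
  have hb : (1:ℝ) ≤ b := le_max_left _ _
  have hc : (1:ℝ) ≤ c := le_max_left _ _
  have up : ∀ m k, N ≤ m → g (m + k) ≤ b ^ k * g m := by
    intro m k hm
    induction k with
    | zero => simpa using le_refl (g m)
    | succ k ih =>
      have h1 : g (m + k + 1) ≤ a₂ * g (m + k) := (h (m + k) (by omega)).2
      have h2 : a₂ * g (m + k) ≤ b * g (m + k) :=
        mul_le_mul_of_nonneg_right (le_max_right _ _) (hg _)
      calc g (m + (k + 1)) = g (m + k + 1) := by ring_nf
        _ ≤ b * g (m + k) := h1.trans h2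
        _ ≤ b * (b ^ k * g m) := mul_le_mul_of_nonneg_left ih (by linarith)
        _ = b ^ (k + 1) * g m := by ring
  have down : ∀ m k, N ≤ m → g m ≤ c ^ k * g (m + k) := by
    intro m k hm
    induction k with
    | zero => simpa using le_refl (g m)
    | succ k ih =>
      have h1 : a₁ * g (m + k) ≤ g (m + k + 1) := (h (m + k) (by omega)).1
      have h2 : g (m + k) ≤ a₁⁻¹ * g (m + k + 1) := by
        have := mul_le_mul_of_nonneg_left h1 (le_of_lt (inv_pos.mpr ha₁))
        rwa [← mul_assoc, inv_mul_cancel₀ ha₁.ne', one_mul] at this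
      have h3 : a₁⁻¹ * g (m + k + 1) ≤ c * g (m + k + 1) :=
        mul_le_mul_of_nonneg_right (le_max_right _ _) (hg _)
      calc g m ≤ c ^ k * g (m + k) := ih
        _ ≤ c ^ k * (c * g (m + k + 1)) :=
            mul_le_mul_of_nonneg_left (h2.trans h3) (by positivity)
        _ = c ^ (k + 1) * g (m + (k + 1)) := by ring_nf
  have hbpos : (0:ℝ) < b := lt_of_lt_of_le one_pos hb
  have hcpos : (0:ℝ) < c := lt_of_lt_of_le one_pos hc
  refine ⟨b ^ N + c ^ N, by positivity, fun u v hu hv huv hvu => ?_⟩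
  rcases le_total v u with hle | hle
  · have h1 : g u ≤ b ^ (u - v) * g v := by
      have := up v (u - v) hv
      rwa [Nat.add_sub_cancel' hle] at this
    have h2 : b ^ (u - v) ≤ b ^ N := pow_le_pow_right₀ hb (by omega)
    have h3 : (0:ℝ) < c ^ N := pow_pos hcpos N
    nlinarith [hg v, hg u, mul_le_mul_of_nonneg_right h2 (hg v)]
  · have h1 : g u ≤ c ^ (v - u) * g v := by
      have := down u (v - u) hu
      rwa [Nat.add_sub_cancel' hle] at this
    have h2 : c ^ (v - u) ≤ c ^ N := pow_le_pow_right₀ hc (by omega)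
    have h3 : (0:ℝ) < b ^ N := pow_pos hbpos N
    nlinarith [hg v, hg u, mul_le_mul_of_nonneg_right h2 (hg v)]

lemma conv_le_left {f f' g : ℕ → ℝ} (hf : ∀ n, 0 ≤ f n) (hf' : ∀ n, 0 ≤ f' n)
    (hg : ∀ n, 0 ≤ g n) (hf'z : ¬ ∀ n, f' n = 0)
    (hff' : SameClass f f') (htg : TransInv g) :
    ∃ C : ℝ, 0 < C ∧ ∀ᶠ n in atTop, conv f g n ≤ C * conv f' g n := by
  obtain ⟨c₁, c₂, hc₁, hc₂, hev⟩ := hff'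
  obtain ⟨a₁, a₂, ha₁, ha₂, hevg⟩ := htg
  rw [eventually_atTop] at hev hevg
  obtain ⟨M₁, hM₁⟩ := hev
  obtain ⟨M₂, hM₂⟩ := hevg
  push_neg at hf'z
  obtain ⟨s₁, hs₁⟩ := hf'z
  have hfs₁ : 0 < f' s₁ := lt_of_le_of_ne (hf' s₁) (Ne.symm hs₁)
  set N := M₁ + M₂ + s₁ + 1 with hN
  have hshift : ∀ m, N ≤ m → a₁ * g m ≤ g (m + 1) ∧ g (m + 1) ≤ a₂ * g m :=
    fun m hm => hM₂ m (by omega)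
  obtain ⟨A, hA, hAle⟩ := shift_bound hg ha₁ hshift
  set K := ∑ s ∈ Finset.range N, f s with hK
  have hK0 : 0 ≤ K := Finset.sum_nonneg fun s _ => hf s
  refine ⟨K * A / f' s₁ + c₂, by positivity, ?_⟩
  rw [eventually_atTop]
  refine ⟨2 * N, fun n hn => ?_⟩
  have hsplit : conv f g n
      = (∑ s ∈ Finset.Ico 0 N, f s * g (n - s)) + ∑ s ∈ Finset.Ico N (n + 1), f s * g (n - s) := by
    simp only [conv]
    rw [Finset.range_eq_Ico]
    exact (Finset.sum_Ico_consecutive _ (Nat.zero_le N) (by omega)).symm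
  -- head bound
  have hhead : (∑ s ∈ Finset.Ico 0 N, f s * g (n - s)) ≤ K * A * g (n - s₁) := by
    have hterm : ∀ s ∈ Finset.Ico 0 N, f s * g (n - s) ≤ f s * (A * g (n - s₁)) := by
      intro s hs
      rw [Finset.mem_Ico] at hs
      refine mul_le_mul_of_nonneg_left ?_ (hf s)
      exact hAle (n - s) (n - s₁) (by omega) (by omega) (by omega) (by omega)
    calc (∑ s ∈ Finset.Ico 0 N, f s * g (n - s))
        ≤ ∑ s ∈ Finset.Ico 0 N, f s * (A * g (n - s₁)) := Finset.sum_le_sum hterm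
      _ = K * A * g (n - s₁) := by
          rw [← Finset.sum_mul, hK, Finset.range_eq_Ico]; ring
  have hsingle : f' s₁ * g (n - s₁) ≤ conv f' g n := by
    refine Finset.single_le_sum (f := fun s => f' s * g (n - s))
      (fun i _ => mul_nonneg (hf' i) (hg _)) ?_
    rw [Finset.mem_range]; omega
  have hhead2 : (∑ s ∈ Finset.Ico 0 N, f s * g (n - s)) ≤ K * A / f' s₁ * conv f' g n := by
    have h1 : K * A * g (n - s₁) = K * A / f' s₁ * (f' s₁ * g (n - s₁)) := by
      field_simp
    have h2 : (0:ℝ) ≤ K * A / f' s₁ := by positivity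
    calc (∑ s ∈ Finset.Ico 0 N, f s * g (n - s)) ≤ K * A * g (n - s₁) := hhead
      _ = K * A / f' s₁ * (f' s₁ * g (n - s₁)) := h1
      _ ≤ K * A / f' s₁ * conv f' g n := mul_le_mul_of_nonneg_left hsingle h2
  -- tail bound
  have htail : (∑ s ∈ Finset.Ico N (n + 1), f s * g (n - s)) ≤ c₂ * conv f' g n := by
    have hterm : ∀ s ∈ Finset.Ico N (n + 1), f s * g (n - s) ≤ c₂ * (f' s * g (n - s)) := by
      intro s hs
      rw [Finset.mem_Ico] at hs
      have := (hM₁ s (by omega)).2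
      calc f s * g (n - s) ≤ (c₂ * f' s) * g (n - s) :=
            mul_le_mul_of_nonneg_right this (hg _)
        _ = c₂ * (f' s * g (n - s)) := by ring
    calc (∑ s ∈ Finset.Ico N (n + 1), f s * g (n - s))
        ≤ ∑ s ∈ Finset.Ico N (n + 1), c₂ * (f' s * g (n - s)) := Finset.sum_le_sum hterm
      _ = c₂ * ∑ s ∈ Finset.Ico N (n + 1), f' s * g (n - s) := by rw [Finset.mul_sum]
      _ ≤ c₂ * conv f' g n := by
          refine mul_le_mul_of_nonneg_left ?_ (le_of_lt hc₂)
          refine Finset.sum_le_sum_of_subset_of_nonneg ?_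
            (fun i _ _ => mul_nonneg (hf' i) (hg _))
          rw [Finset.range_eq_Ico]
          exact Finset.Ico_subset_Ico (Nat.zero_le _) le_rfl
  calc conv f g n = _ := hsplit
    _ ≤ K * A / f' s₁ * conv f' g n + c₂ * conv f' g n := add_le_add hhead2 htail
    _ = (K * A / f' s₁ + c₂) * conv f' g n := by ring

theorem conv_not_zero_and_sameClass
    (f f' g g' : ℕ → ℝ)
    (hf : ∀ n, 0 ≤ f n) (hf' : ∀ n, 0 ≤ f' n)
    (hg : ∀ n, 0 ≤ g n) (hg' : ∀ n, 0 ≤ g' n)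
    (hfz : ¬ ∀ n, f n = 0) (hf'z : ¬ ∀ n, f' n = 0)
    (hgz : ¬ ∀ n, g n = 0) (hg'z : ¬ ∀ n, g' n = 0)
    (hff' : SameClass f f') (hgg' : SameClass g g')
    (htf : TransInv f) (htf' : TransInv f') (htg : TransInv g) (htg' : TransInv g') :
    (¬ ∀ n, conv f g n = 0) ∧ SameClass (conv f g) (conv f' g') := by
  constructor
  · push_neg at hfz hgz
    obtain ⟨a, ha⟩ := hfz
    obtain ⟨b, hb⟩ := hgz
    have hfa : 0 < f a := lt_of_le_of_ne (hf a) (Ne.symm ha)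
    have hgb : 0 < g b := lt_of_le_of_ne (hg b) (Ne.symm hb)
    intro hall
    have hterm : f a * g (a + b - a) ≤ conv f g (a + b) :=
      Finset.single_le_sum (f := fun s => f s * g (a + b - s))
        (fun i _ => mul_nonneg (hf i) (hg _)) (by rw [Finset.mem_range]; omega)
    rw [Nat.add_sub_cancel_left] at hterm
    have := hall (a + b)
    nlinarith
  · obtain ⟨C, hC, hCle⟩ := conv_le_left hf hf' hg hf'z hff' htg
    obtain ⟨D, hD, hDle⟩ := conv_le_left hg hg' hf' hg'z hgg' htf'
    obtain ⟨C', hC', hC'le⟩ := conv_le_left hf' hf hg' hfz (mySameClass_symm hff') htg'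
    obtain ⟨D', hD', hD'le⟩ := conv_le_left hg' hg hf hgz (mySameClass_symm hgg') htf
    refine ⟨(C' * D')⁻¹, C * D, by positivity, by positivity, ?_⟩
    filter_upwards [hCle, hDle, hC'le, hD'le] with n h1 h2 h3 h4
    rw [show conv f' g = conv g f' from myconv_comm f' g] at h1
    rw [show conv g' f' = conv f' g' from myconv_comm g' f'] at h2
    rw [show conv f g' = conv g' f from myconv_comm f g'] at h3
    rw [show conv g f = conv f g from myconv_comm g f] at h4
    constructor
    · -- (C' * D')⁻¹ * conv f' g' n ≤ conv f g n
      have hup : conv f' g' n ≤ C' * D' * conv f g n := by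
        calc conv f' g' n ≤ C' * conv g' f n := h3
          _ ≤ C' * (D' * conv f g n) := mul_le_mul_of_nonneg_left h4 (le_of_lt hC')
          _ = C' * D' * conv f g n := by ring
      have hpos : (0:ℝ) < C' * D' := by positivity
      have := mul_le_mul_of_nonneg_left hup (le_of_lt (inv_pos.mpr hpos))
      rwa [← mul_assoc, inv_mul_cancel₀ hpos.ne', one_mul] at this
    · calc conv f g n ≤ C * conv g f' n := h1
        _ ≤ C * (D * conv f' g' n) := mul_le_mul_of_nonneg_left h2 (le_of_lt hC)
        _ = C * D * conv f' g' n := by ring
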